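/- Let A be a commutative semisimple regular Banach algebra with a bounded approximate identity bounded by c > 0, whose Gelfand spectrum is a locally compact Hausdorff space X. Then for every compact set K ⊆ X there exists u_K ∈ A with ‖u_K‖ ≤ c + 1 such that the Gelfand transform of u_K is identically 1 on K. -/
import Mathlib


open WeakDual

/-- In a commutative semisimple regular Banach algebra with a bounded approximate identity
bounded by `c`, every compact subset `K` of the Gelfand spectrum admits an element of norm at
most `c + 1` whose Gelfand transform is identically `1` on `K`. -/
theorem stmt10 {A : Type*} [NormedCommRing A] [NormedAlgebra ℂ A] [CompleteSpace A]
    (hss : ∀ a b : A, (∀ φ : characterSpace ℂ A, φ a = φ b) → a = b)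
    (hreg : ∀ (K F : Set (characterSpace ℂ A)), IsCompact K → IsClosed F → Disjoint K F →
      ∃ a : A, (∀ φ ∈ K, φ a = 1) ∧ ∀ φ ∈ F, φ a = 0)
    (c : ℝ) (hc : 0 < c)
    {ι : Type*} (l : Filter ι) [l.NeBot] (e : ι → A)
    (he_bdd : ∀ i, ‖e i‖ ≤ c)
    (he : ∀ a : A, Filter.Tendsto (fun i => e i * a) l (nhds a))
    (K : Set (characterSpace ℂ A)) (hK : IsCompact K) :
    ∃ u : A, ‖u‖ ≤ c + 1 ∧ ∀ φ ∈ K, φ u = 1 := by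
  obtain ⟨a, ha1, -⟩ := hreg K ∅ hK isClosed_empty (Set.disjoint_empty K)
  have htend : Filter.Tendsto (fun i => ‖a - e i * a‖) l (nhds 0) := by
    have := (he a).const_sub a
    simpa using this.norm
  have hev : ∀ᶠ i in l, ‖a - e i * a‖ < 1 := by
    have := htend.eventually (eventually_lt_nhds one_pos)
    simpa using this
  obtain ⟨i, hi⟩ := hev.exists
  refine ⟨e i + (a - e i * a), ?_, ?_⟩
  · calc ‖e i + (a - e i * a)‖ ≤ ‖e i‖ + ‖a - e i * a‖ := norm_add_le _ _
      _ ≤ c + 1 := add_le_add (he_bdd i) hi.le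
  · intro φ hφ
    have := ha1 φ hφ
    simp [map_add, map_sub, map_mul, this]
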